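/- Define ordered rooted trees T_i by: T_1 is a single node; for i ≥ 2, the root of T_i has five children c_1, …, c_5 in left-to-right order, where each of T_{c_1}, T_{c_2}, T_{c_4}, T_{c_5} is a copy of T_{i−1}, and c_3 has exactly two children, each of which is the root of a copy of T_{i−1}. Then for every i ≥ 1, every node of T_i has degree at most 5, rpw(T_i) ≤ i, and R(T_i) ≥ 2i − 1. -/

import Mathlib

/-- A finite rooted tree: a root together with the list of subtrees
rooted at its children (the list order is the left-to-right order for
ordered trees; definitions that do not mention the order are
order-independent). -/
inductive RTree : Type where
  | node : List RTree → RTree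

namespace RTree

/-- The subtrees rooted at the children of the root. -/
def children : RTree → List RTree
  | node cs => cs

/-- Number of nodes of the tree. -/
def size : RTree → ℕ
  | node cs => 1 + (cs.attach.map fun c => size c.1).sum
decreasing_by have := List.sizeOf_lt_of_mem c.2; simp only [RTree.node.sizeOf_spec]; omega

/-- Maximum of a list of naturals (`0` for the empty list). -/
def listMaxD (l : List ℕ) : ℕ := l.foldr max 0

/-- Minimum of a nonempty list of naturals (`0` for the empty list). -/
def listMinD : List ℕ → ℕ
  | [] => 0
  | x :: xs => xs.foldr min x

/-- Given the list `rs` of rooted pathwidths of the children of the root,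
the rooted pathwidth of the tree:
`1` if there are no children, and otherwise
`min over j of (max over i of rs[i] + χ(i ≠ j))`. -/
def rpwAux (rs : List ℕ) : ℕ :=
  if rs = [] then 1 else
    listMinD ((List.range rs.length).map fun j =>
      listMaxD ((List.range rs.length).map fun i =>
        rs.getD i 0 + if i = j then 0 else 1))

/-- The rooted pathwidth `rpw` of a rooted tree. -/
def rpw : RTree → ℕ
  | node cs => rpwAux (cs.attach.map fun c => rpw c.1)
decreasing_by have := List.sizeOf_lt_of_mem c.2; simp only [RTree.node.sizeOf_spec]; omega

end RTree

namespace RTree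

/-- A rank-`W`-witness for a tree whose root has `rs.length ≥ 1` children,
where `rs` is the list of ranks of the children subtrees (left to right,
`0`-indexed).  It consists of a set `big` of big children (the others are
small), a coordinate `X` with `1 ≤ X ≤ W`, and the index `v` of the
vertical child, which must be big, subject to (R1ℓ), (R1r), (R2ℓ), (R2r)
and (R3). -/
def IsRankWitness (rs : List ℕ) (W : ℕ) (big : Finset (Fin rs.length)) (X : ℕ)
    (v : Fin rs.length) : Prop :=
  1 ≤ X ∧ X ≤ W ∧ v ∈ big ∧
  -- (R1ℓ): at most X-1 big children are strictly left of c_v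
  ((big.filter fun i => i < v).card < X) ∧
  -- (R1r): at most W-X big children are strictly right of c_v
  ((big.filter fun i => v < i).card + X ≤ W) ∧
  -- (R2ℓ): every small child left of c_v has rank ≤ X-1-ℓ_i
  (∀ i : Fin rs.length, i ∉ big → i < v →
      rs.get i + (big.filter fun j => j < i).card + 1 ≤ X) ∧
  -- (R2r): every small child right of c_v has rank ≤ W-X-r_i
  (∀ i : Fin rs.length, i ∉ big → v < i →
      rs.get i + (big.filter fun j => i < j).card + X ≤ W) ∧
  -- (R3): injective rank-bounds π : big → {1,…,W} dominating the ranks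
  (∃ π : Fin rs.length → ℕ,
      (∀ i ∈ big, rs.get i ≤ π i ∧ 1 ≤ π i ∧ π i ≤ W) ∧
      Set.InjOn π big)

/-- `T` (with child rank list `rs`) has some rank-`W`-witness. -/
def hasRankWitness (rs : List ℕ) (W : ℕ) : Prop :=
  ∃ (big : Finset (Fin rs.length)) (X : ℕ) (v : Fin rs.length),
    IsRankWitness rs W big X v

/-- Rank of a tree, given the list of ranks of the children of the root:
`1` for a single node, else the smallest `W ≥ 1` admitting a rank-`W`-witness. -/
noncomputable def rankAux (rs : List ℕ) : ℕ :=
  if rs = [] then 1 else sInf {W | 1 ≤ W ∧ hasRankWitness rs W}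

/-- The rank `R(T)` of an ordered rooted tree. -/
noncomputable def rank : RTree → ℕ
  | node cs => rankAux (cs.attach.map fun c => rank c.1)
decreasing_by have := List.sizeOf_lt_of_mem c.2; simp only [RTree.node.sizeOf_spec]; omega

/-- A left-corner-`W`-witness, given the list `rs` of ranks of the children of
the root: a number `W'` with `1 ≤ W' ≤ W+1` and indices
`σ(W') < … < σ(W)` (1-based positions in `{1,…,d}`, so the rank of child
`σ w` is `rs.getD (σ w - 1) 0`) satisfying (C1) and (C2), where by
convention `σ(W'-1) = 0` and `σ(W+1) = d+1`. -/
def IsLeftCornerWitness (rs : List ℕ) (W W' : ℕ) (σ : ℕ → ℕ) : Prop :=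
  1 ≤ W' ∧ W' ≤ W + 1 ∧
  (∀ w, W' ≤ w → w ≤ W → 1 ≤ σ w ∧ σ w ≤ rs.length) ∧
  (∀ w, W' ≤ w → w + 1 ≤ W → σ w < σ (w + 1)) ∧
  -- (C1)
  (∀ w, W' ≤ w → w ≤ W → rs.getD (σ w - 1) 0 = w) ∧
  -- (C2): for `W'-1 ≤ w ≤ W`, children strictly between σ(w) and σ(w+1)
  -- have rank ≤ w-1
  (∀ w, W' ≤ w + 1 → w ≤ W → ∀ i,
      (if W' ≤ w then σ w else 0) < i →
      i < (if w + 1 ≤ W then σ (w + 1) else rs.length + 1) →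
      rs.getD (i - 1) 0 + 1 ≤ w)

/-- A right-corner-`W`-witness: the mirror notion, with
`σ(W) < … < σ(W')` and the conventions `σ(W'-1) = d+1`, `σ(W+1) = 0`. -/
def IsRightCornerWitness (rs : List ℕ) (W W' : ℕ) (σ : ℕ → ℕ) : Prop :=
  1 ≤ W' ∧ W' ≤ W + 1 ∧
  (∀ w, W' ≤ w → w ≤ W → 1 ≤ σ w ∧ σ w ≤ rs.length) ∧
  (∀ w, W' ≤ w → w + 1 ≤ W → σ (w + 1) < σ w) ∧
  -- (C1)
  (∀ w, W' ≤ w → w ≤ W → rs.getD (σ w - 1) 0 = w) ∧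
  -- (C2)
  (∀ w, W' ≤ w + 1 → w ≤ W → ∀ i,
      (if w + 1 ≤ W then σ (w + 1) else 0) < i →
      i < (if W' ≤ w then σ w else rs.length + 1) →
      rs.getD (i - 1) 0 + 1 ≤ w)

end RTree

namespace RTree

/-- Every node of the tree has at most `k` children. -/
inductive DegLE (k : ℕ) : RTree → Prop
  | mk (cs : List RTree) : cs.length ≤ k → (∀ c ∈ cs, DegLE k c) →
      DegLE k (RTree.node cs)

/-- The family `T_i` (indexed so that `Tquint i = T_i` for `i ≥ 1`):
`T_1` is a single node; for `i ≥ 2` the root of `T_i` has five children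
`c_1, …, c_5` in left-to-right order, where each of
`T_{c_1}, T_{c_2}, T_{c_4}, T_{c_5}` is a copy of `T_{i-1}` and `c_3` has
exactly two children, each of which is the root of a copy of `T_{i-1}`. -/
def Tquint : ℕ → RTree
  | 0 => node []
  | 1 => node []
  | i + 2 =>
    node [Tquint (i + 1), Tquint (i + 1),
      node [Tquint (i + 1), Tquint (i + 1)],
      Tquint (i + 1), Tquint (i + 1)]



lemma rpw_node (cs : List RTree) : rpw (node cs) = rpwAux (cs.map rpw) := by
  rw [rpw]; congr 1; simp

lemma rank_node (cs : List RTree) : rank (node cs) = rankAux (cs.map rank) := by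
  rw [rank]; congr 1; simp

lemma foldr_min_le (ys : List ℕ) (y x : ℕ) (h : x = y ∨ x ∈ ys) :
    ys.foldr min y ≤ x := by
  induction ys with
  | nil =>
    rcases h with h | h
    · simp [h]
    · simp at h
  | cons z zs ih =>
    simp only [List.foldr_cons]
    rcases h with h | h
    · exact le_trans (min_le_right _ _) (ih (Or.inl h))
    · rcases List.mem_cons.mp h with h | h
      · simp [h]
      · exact le_trans (min_le_right _ _) (ih (Or.inr h))

lemma listMinD_le {l : List ℕ} {x : ℕ} (hx : x ∈ l) : listMinD l ≤ x := by
  match l with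
  | y :: ys =>
    rcases List.mem_cons.mp hx with h | h
    · exact foldr_min_le ys y x (Or.inl h)
    · exact foldr_min_le ys y x (Or.inr h)

lemma listMaxD_le {l : List ℕ} {B : ℕ} (h : ∀ x ∈ l, x ≤ B) : listMaxD l ≤ B := by
  induction l with
  | nil => simp [listMaxD]
  | cons y ys ih =>
    simp only [listMaxD, List.foldr_cons] at *
    have := h y (by simp)
    have h2 := ih (fun x hx => h x (by simp [hx]))
    omega

lemma rpwAux_le {rs : List ℕ} {j B : ℕ} (hj : j < rs.length)
    (h : ∀ i < rs.length, rs.getD i 0 + (if i = j then 0 else 1) ≤ B) :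
    rpwAux rs ≤ B := by
  have hne : rs ≠ [] := by intro h'; simp [h'] at hj
  rw [rpwAux, if_neg hne]
  refine le_trans (listMinD_le (x := listMaxD ((List.range rs.length).map fun i =>
        rs.getD i 0 + if i = j then 0 else 1)) ?_) ?_
  · exact List.mem_map.mpr ⟨j, List.mem_range.mpr hj, rfl⟩
  · exact listMaxD_le (by
      intro x hx
      rcases List.mem_map.mp hx with ⟨i, hi, rfl⟩
      exact h i (List.mem_range.mp hi))

end RTree
namespace RTree

lemma le_listMaxD {l : List ℕ} {x : ℕ} (hx : x ∈ l) : x ≤ listMaxD l := by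
  induction l with
  | nil => simp at hx
  | cons y ys ih =>
    simp only [listMaxD, List.foldr_cons] at *
    rcases List.mem_cons.mp hx with h | h
    · omega
    · have := ih h; omega

lemma exists_witness (rs : List ℕ) (h : rs ≠ []) :
    hasRankWitness rs (listMaxD rs + rs.length) := by
  have hlen : 0 < rs.length := List.length_pos_iff.mpr h
  refine ⟨Finset.univ, 1, ⟨0, hlen⟩, ?_, ?_, Finset.mem_univ _, ?_, ?_, ?_, ?_, ?_⟩
  · rfl
  · omega
  · have : (Finset.univ.filter fun i : Fin rs.length => i < ⟨0, hlen⟩) = ∅ := by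
      ext x; simp [Fin.lt_def]
    simp [this]
  · have hsub : (Finset.univ.filter fun i : Fin rs.length => (⟨0, hlen⟩ : Fin rs.length) < i)
        ⊆ Finset.univ.erase ⟨0, hlen⟩ := by
      intro x hx
      simp only [Finset.mem_filter] at hx
      exact Finset.mem_erase.mpr ⟨by intro hh; rw [hh] at hx; exact lt_irrefl _ hx.2,
        Finset.mem_univ _⟩
    have := Finset.card_le_card hsub
    rw [Finset.card_erase_of_mem (Finset.mem_univ _), Finset.card_univ, Fintype.card_fin] at this
    omega
  · intro i hi; simp at hi
  · intro i hi; simp at hi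
  · refine ⟨fun i => listMaxD rs + 1 + i.1, ?_, ?_⟩
    · intro i _
      have hi2 : i.1 < rs.length := i.2
      have hmem : rs.get i ∈ rs := List.get_mem rs i
      have := le_listMaxD hmem
      refine ⟨show rs.get i ≤ listMaxD rs + 1 + i.1 by omega,
        show 1 ≤ listMaxD rs + 1 + i.1 by omega,
        show listMaxD rs + 1 + i.1 ≤ listMaxD rs + rs.length by omega⟩
    · intro x _ y _ hxy
      simp only at hxy
      exact Fin.ext (by omega)

lemma rankAux_lb (rs : List ℕ) (k : ℕ) (h : rs ≠ [])
    (hk : ∀ W, hasRankWitness rs W → k ≤ W) : k ≤ rankAux rs := by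
  rw [rankAux, if_neg h]
  have hne : {W | 1 ≤ W ∧ hasRankWitness rs W}.Nonempty := by
    refine ⟨listMaxD rs + rs.length, ?_, exists_witness rs h⟩
    have : 0 < rs.length := List.length_pos_iff.mpr h
    omega
  have := Nat.sInf_mem hne
  exact hk _ this.2

end RTree

namespace RTree

lemma card_filter_fin {n : ℕ} (big : Finset (Fin n)) (p : Fin n → Prop) [DecidablePred p] :
    (big.filter p).card = ∑ k : Fin n, if p k then (if k ∈ big then 1 else 0) else 0 := by
  rw [Finset.card_filter]
  rw [← Finset.univ_inter big, ← Finset.sum_ite_mem]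
  refine Finset.sum_congr rfl fun k _ => ?_
  by_cases hp : p k <;> by_cases hm : k ∈ big <;> simp [hp, hm]

lemma big_card_bound {rs : List ℕ} {W a : ℕ} {big : Finset (Fin rs.length)}
    {π : Fin rs.length → ℕ}
    (hne : big.Nonempty)
    (hr : ∀ i ∈ big, a ≤ rs.get i)
    (hπ : ∀ i ∈ big, rs.get i ≤ π i ∧ 1 ≤ π i ∧ π i ≤ W)
    (hinj : Set.InjOn π big) :
    a + big.card ≤ W + 1 := by
  have himg : Finset.image π big ⊆ Finset.Icc a W := by
    intro x hx
    rcases Finset.mem_image.mp hx with ⟨i, hi, rfl⟩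
    obtain ⟨hg, _, hgW⟩ := hπ i hi
    exact Finset.mem_Icc.mpr ⟨le_trans (hr i hi) hg, hgW⟩
  have hcard := Finset.card_le_card himg
  rw [Finset.card_image_of_injOn hinj, Nat.card_Icc] at hcard
  have h1 : 1 ≤ big.card := Finset.card_pos.mpr hne
  omega

lemma rank_pair_core (a W X : ℕ) (big : Finset (Fin 2)) (v : Fin 2) (g : Fin 2 → ℕ)
    (hg0 : a ≤ g 0) (hg1 : a ≤ g 1)
    (hX1 : 1 ≤ X) (hXW : X ≤ W) (hv : v ∈ big) (hcard : a + big.card ≤ W + 1)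
    (hR2l : ∀ i, i ∉ big → i < v → g i + (big.filter fun j => j < i).card + 1 ≤ X)
    (hR2r : ∀ i, i ∉ big → v < i → g i + (big.filter fun j => i < j).card + X ≤ W) :
    a + 1 ≤ W := by
  set b : Fin 2 → ℕ := fun k => if k ∈ big then 1 else 0 with hb
  have hble : ∀ k, b k ≤ 1 := by
    intro k; rw [hb]; dsimp only; split <;> omega
  have hb0l := hble 0; have hb1l := hble 1
  have hcardsum : big.card = b 0 + b 1 := by
    have h2 : ∑ k : Fin 2, b k = big.card := by
      simp [hb, Finset.sum_ite_mem]
    rw [← h2, Fin.sum_univ_two]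
  have eL0 : (big.filter fun j => j < (0:Fin 2)).card = 0 := by
    rw [card_filter_fin, Fin.sum_univ_two]
    simp only [eq_false (show ¬((0:Fin 2) < 0) by decide),
      eq_false (show ¬((1:Fin 2) < 0) by decide), if_false, add_zero]
  have eG1 : (big.filter fun j => (1:Fin 2) < j).card = 0 := by
    rw [card_filter_fin, Fin.sum_univ_two]
    simp only [eq_false (show ¬((1:Fin 2) < 0) by decide),
      eq_false (show ¬((1:Fin 2) < 1) by decide), if_false, add_zero]
  fin_cases v
  · have hv' : (0:Fin 2) ∈ big := hv
    have hvb : b 0 = 1 := by rw [hb]; dsimp only; rw [if_pos hv']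
    have D1 : b 1 = 1 ∨ g 1 + (big.filter fun j => (1:Fin 2) < j).card + X ≤ W := by
      by_cases hm : (1:Fin 2) ∈ big
      · left; rw [hb]; dsimp only; rw [if_pos hm]
      · exact Or.inr (hR2r 1 hm (by decide))
    omega
  · have hv' : (1:Fin 2) ∈ big := hv
    have hvb : b 1 = 1 := by rw [hb]; dsimp only; rw [if_pos hv']
    have D0 : b 0 = 1 ∨ g 0 + (big.filter fun j => j < (0:Fin 2)).card + 1 ≤ X := by
      by_cases hm : (0:Fin 2) ∈ big
      · left; rw [hb]; dsimp only; rw [if_pos hm]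
      · exact Or.inr (hR2l 0 hm (by decide))
    omega

set_option maxHeartbeats 2000000 in
lemma rank_five_core (a W X : ℕ) (big : Finset (Fin 5)) (v : Fin 5) (g : Fin 5 → ℕ)
    (hg0 : a ≤ g 0) (hg1 : a ≤ g 1) (hg2 : a + 1 ≤ g 2) (hg3 : a ≤ g 3) (hg4 : a ≤ g 4)
    (ha : 1 ≤ a) (hX1 : 1 ≤ X) (hXW : X ≤ W) (hv : v ∈ big)
    (hcard : a + big.card ≤ W + 1)
    (hR2l : ∀ i, i ∉ big → i < v → g i + (big.filter fun j => j < i).card + 1 ≤ X)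
    (hR2r : ∀ i, i ∉ big → v < i → g i + (big.filter fun j => i < j).card + X ≤ W) :
    a + 2 ≤ W := by
  set b : Fin 5 → ℕ := fun k => if k ∈ big then 1 else 0 with hb
  have hble : ∀ k, b k ≤ 1 := by
    intro k; rw [hb]; dsimp only; split <;> omega
  have hb0l := hble 0; have hb1l := hble 1; have hb2l := hble 2
  have hb3l := hble 3; have hb4l := hble 4
  have hcardsum : big.card = b 0 + b 1 + b 2 + b 3 + b 4 := by
    have h5 : ∑ k : Fin 5, b k = big.card := by
      simp [hb, Finset.sum_ite_mem]
    rw [← h5, Fin.sum_univ_five]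
  have eL1 : (big.filter fun j => j < (1:Fin 5)).card = b 0 := by
    rw [card_filter_fin, Fin.sum_univ_five]
    simp only [eq_true (show (0:Fin 5) < 1 by decide), eq_false (show ¬((1:Fin 5) < 1) by decide), eq_false (show ¬((2:Fin 5) < 1) by decide), eq_false (show ¬((3:Fin 5) < 1) by decide), eq_false (show ¬((4:Fin 5) < 1) by decide), if_true, if_false, add_zero, zero_add, hb]
  have eL2 : (big.filter fun j => j < (2:Fin 5)).card = b 0 + b 1 := by
    rw [card_filter_fin, Fin.sum_univ_five]
    simp only [eq_true (show (0:Fin 5) < 2 by decide), eq_true (show (1:Fin 5) < 2 by decide), eq_false (show ¬((2:Fin 5) < 2) by decide), eq_false (show ¬((3:Fin 5) < 2) by decide), eq_false (show ¬((4:Fin 5) < 2) by decide), if_true, if_false, add_zero, zero_add, hb]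
  have eL3 : (big.filter fun j => j < (3:Fin 5)).card = b 0 + b 1 + b 2 := by
    rw [card_filter_fin, Fin.sum_univ_five]
    simp only [eq_true (show (0:Fin 5) < 3 by decide), eq_true (show (1:Fin 5) < 3 by decide), eq_true (show (2:Fin 5) < 3 by decide), eq_false (show ¬((3:Fin 5) < 3) by decide), eq_false (show ¬((4:Fin 5) < 3) by decide), if_true, if_false, add_zero, zero_add, hb]
  have eL4 : (big.filter fun j => j < (4:Fin 5)).card = b 0 + b 1 + b 2 + b 3 := by
    rw [card_filter_fin, Fin.sum_univ_five]
    simp only [eq_true (show (0:Fin 5) < 4 by decide), eq_true (show (1:Fin 5) < 4 by decide), eq_true (show (2:Fin 5) < 4 by decide), eq_true (show (3:Fin 5) < 4 by decide), eq_false (show ¬((4:Fin 5) < 4) by decide), if_true, if_false, add_zero, zero_add, hb]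
  have eG0 : (big.filter fun j => (0:Fin 5) < j).card = b 1 + b 2 + b 3 + b 4 := by
    rw [card_filter_fin, Fin.sum_univ_five]
    simp only [eq_false (show ¬((0:Fin 5) < 0) by decide), eq_true (show (0:Fin 5) < 1 by decide), eq_true (show (0:Fin 5) < 2 by decide), eq_true (show (0:Fin 5) < 3 by decide), eq_true (show (0:Fin 5) < 4 by decide), if_true, if_false, add_zero, zero_add, hb]
  have eG1 : (big.filter fun j => (1:Fin 5) < j).card = b 2 + b 3 + b 4 := by
    rw [card_filter_fin, Fin.sum_univ_five]
    simp only [eq_false (show ¬((1:Fin 5) < 0) by decide), eq_false (show ¬((1:Fin 5) < 1) by decide), eq_true (show (1:Fin 5) < 2 by decide), eq_true (show (1:Fin 5) < 3 by decide), eq_true (show (1:Fin 5) < 4 by decide), if_true, if_false, add_zero, zero_add, hb]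
  have eG2 : (big.filter fun j => (2:Fin 5) < j).card = b 3 + b 4 := by
    rw [card_filter_fin, Fin.sum_univ_five]
    simp only [eq_false (show ¬((2:Fin 5) < 0) by decide), eq_false (show ¬((2:Fin 5) < 1) by decide), eq_false (show ¬((2:Fin 5) < 2) by decide), eq_true (show (2:Fin 5) < 3 by decide), eq_true (show (2:Fin 5) < 4 by decide), if_true, if_false, add_zero, zero_add, hb]
  have eG3 : (big.filter fun j => (3:Fin 5) < j).card = b 4 := by
    rw [card_filter_fin, Fin.sum_univ_five]
    simp only [eq_false (show ¬((3:Fin 5) < 0) by decide), eq_false (show ¬((3:Fin 5) < 1) by decide), eq_false (show ¬((3:Fin 5) < 2) by decide), eq_false (show ¬((3:Fin 5) < 3) by decide), eq_true (show (3:Fin 5) < 4 by decide), if_true, if_false, add_zero, zero_add, hb]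
  have eL0 : (big.filter fun j => j < (0:Fin 5)).card = 0 := by
    rw [card_filter_fin, Fin.sum_univ_five]
    simp only [eq_false (show ¬((0:Fin 5) < 0) by decide), eq_false (show ¬((1:Fin 5) < 0) by decide), eq_false (show ¬((2:Fin 5) < 0) by decide), eq_false (show ¬((3:Fin 5) < 0) by decide), eq_false (show ¬((4:Fin 5) < 0) by decide), if_false, add_zero]
  have eG4 : (big.filter fun j => (4:Fin 5) < j).card = 0 := by
    rw [card_filter_fin, Fin.sum_univ_five]
    simp only [eq_false (show ¬((4:Fin 5) < 0) by decide), eq_false (show ¬((4:Fin 5) < 1) by decide), eq_false (show ¬((4:Fin 5) < 2) by decide), eq_false (show ¬((4:Fin 5) < 3) by decide), eq_false (show ¬((4:Fin 5) < 4) by decide), if_false, add_zero]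
  fin_cases v
  · -- v = 0
    have hv' : (0:Fin 5) ∈ big := hv
    have hvb : b 0 = 1 := by rw [hb]; dsimp only; rw [if_pos hv']
    have D1 : b 1 = 1 ∨ g 1 + (big.filter fun j => (1:Fin 5) < j).card + X ≤ W := by
      by_cases hm : (1:Fin 5) ∈ big
      · left; rw [hb]; dsimp only; rw [if_pos hm]
      · exact Or.inr (hR2r 1 hm (by decide))
    have D2 : b 2 = 1 ∨ g 2 + (big.filter fun j => (2:Fin 5) < j).card + X ≤ W := by
      by_cases hm : (2:Fin 5) ∈ big
      · left; rw [hb]; dsimp only; rw [if_pos hm]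
      · exact Or.inr (hR2r 2 hm (by decide))
    have D3 : b 3 = 1 ∨ g 3 + (big.filter fun j => (3:Fin 5) < j).card + X ≤ W := by
      by_cases hm : (3:Fin 5) ∈ big
      · left; rw [hb]; dsimp only; rw [if_pos hm]
      · exact Or.inr (hR2r 3 hm (by decide))
    have D4 : b 4 = 1 ∨ g 4 + (big.filter fun j => (4:Fin 5) < j).card + X ≤ W := by
      by_cases hm : (4:Fin 5) ∈ big
      · left; rw [hb]; dsimp only; rw [if_pos hm]
      · exact Or.inr (hR2r 4 hm (by decide))
    omega
  · -- v = 1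
    have hv' : (1:Fin 5) ∈ big := hv
    have hvb : b 1 = 1 := by rw [hb]; dsimp only; rw [if_pos hv']
    have D0 : b 0 = 1 ∨ g 0 + (big.filter fun j => j < (0:Fin 5)).card + 1 ≤ X := by
      by_cases hm : (0:Fin 5) ∈ big
      · left; rw [hb]; dsimp only; rw [if_pos hm]
      · exact Or.inr (hR2l 0 hm (by decide))
    have D2 : b 2 = 1 ∨ g 2 + (big.filter fun j => (2:Fin 5) < j).card + X ≤ W := by
      by_cases hm : (2:Fin 5) ∈ big
      · left; rw [hb]; dsimp only; rw [if_pos hm]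
      · exact Or.inr (hR2r 2 hm (by decide))
    have D3 : b 3 = 1 ∨ g 3 + (big.filter fun j => (3:Fin 5) < j).card + X ≤ W := by
      by_cases hm : (3:Fin 5) ∈ big
      · left; rw [hb]; dsimp only; rw [if_pos hm]
      · exact Or.inr (hR2r 3 hm (by decide))
    have D4 : b 4 = 1 ∨ g 4 + (big.filter fun j => (4:Fin 5) < j).card + X ≤ W := by
      by_cases hm : (4:Fin 5) ∈ big
      · left; rw [hb]; dsimp only; rw [if_pos hm]
      · exact Or.inr (hR2r 4 hm (by decide))
    omega
  · -- v = 2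
    have hv' : (2:Fin 5) ∈ big := hv
    have hvb : b 2 = 1 := by rw [hb]; dsimp only; rw [if_pos hv']
    have D0 : b 0 = 1 ∨ g 0 + (big.filter fun j => j < (0:Fin 5)).card + 1 ≤ X := by
      by_cases hm : (0:Fin 5) ∈ big
      · left; rw [hb]; dsimp only; rw [if_pos hm]
      · exact Or.inr (hR2l 0 hm (by decide))
    have D1 : b 1 = 1 ∨ g 1 + (big.filter fun j => j < (1:Fin 5)).card + 1 ≤ X := by
      by_cases hm : (1:Fin 5) ∈ big
      · left; rw [hb]; dsimp only; rw [if_pos hm]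
      · exact Or.inr (hR2l 1 hm (by decide))
    have D3 : b 3 = 1 ∨ g 3 + (big.filter fun j => (3:Fin 5) < j).card + X ≤ W := by
      by_cases hm : (3:Fin 5) ∈ big
      · left; rw [hb]; dsimp only; rw [if_pos hm]
      · exact Or.inr (hR2r 3 hm (by decide))
    have D4 : b 4 = 1 ∨ g 4 + (big.filter fun j => (4:Fin 5) < j).card + X ≤ W := by
      by_cases hm : (4:Fin 5) ∈ big
      · left; rw [hb]; dsimp only; rw [if_pos hm]
      · exact Or.inr (hR2r 4 hm (by decide))
    omega
  · -- v = 3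
    have hv' : (3:Fin 5) ∈ big := hv
    have hvb : b 3 = 1 := by rw [hb]; dsimp only; rw [if_pos hv']
    have D0 : b 0 = 1 ∨ g 0 + (big.filter fun j => j < (0:Fin 5)).card + 1 ≤ X := by
      by_cases hm : (0:Fin 5) ∈ big
      · left; rw [hb]; dsimp only; rw [if_pos hm]
      · exact Or.inr (hR2l 0 hm (by decide))
    have D1 : b 1 = 1 ∨ g 1 + (big.filter fun j => j < (1:Fin 5)).card + 1 ≤ X := by
      by_cases hm : (1:Fin 5) ∈ big
      · left; rw [hb]; dsimp only; rw [if_pos hm]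
      · exact Or.inr (hR2l 1 hm (by decide))
    have D2 : b 2 = 1 ∨ g 2 + (big.filter fun j => j < (2:Fin 5)).card + 1 ≤ X := by
      by_cases hm : (2:Fin 5) ∈ big
      · left; rw [hb]; dsimp only; rw [if_pos hm]
      · exact Or.inr (hR2l 2 hm (by decide))
    have D4 : b 4 = 1 ∨ g 4 + (big.filter fun j => (4:Fin 5) < j).card + X ≤ W := by
      by_cases hm : (4:Fin 5) ∈ big
      · left; rw [hb]; dsimp only; rw [if_pos hm]
      · exact Or.inr (hR2r 4 hm (by decide))
    omega
  · -- v = 4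
    have hv' : (4:Fin 5) ∈ big := hv
    have hvb : b 4 = 1 := by rw [hb]; dsimp only; rw [if_pos hv']
    have D0 : b 0 = 1 ∨ g 0 + (big.filter fun j => j < (0:Fin 5)).card + 1 ≤ X := by
      by_cases hm : (0:Fin 5) ∈ big
      · left; rw [hb]; dsimp only; rw [if_pos hm]
      · exact Or.inr (hR2l 0 hm (by decide))
    have D1 : b 1 = 1 ∨ g 1 + (big.filter fun j => j < (1:Fin 5)).card + 1 ≤ X := by
      by_cases hm : (1:Fin 5) ∈ big
      · left; rw [hb]; dsimp only; rw [if_pos hm]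
      · exact Or.inr (hR2l 1 hm (by decide))
    have D2 : b 2 = 1 ∨ g 2 + (big.filter fun j => j < (2:Fin 5)).card + 1 ≤ X := by
      by_cases hm : (2:Fin 5) ∈ big
      · left; rw [hb]; dsimp only; rw [if_pos hm]
      · exact Or.inr (hR2l 2 hm (by decide))
    have D3 : b 3 = 1 ∨ g 3 + (big.filter fun j => j < (3:Fin 5)).card + 1 ≤ X := by
      by_cases hm : (3:Fin 5) ∈ big
      · left; rw [hb]; dsimp only; rw [if_pos hm]
      · exact Or.inr (hR2l 3 hm (by decide))
    omega

lemma rank_pair_lb (a r0 r1 W : ℕ) (h0 : a ≤ r0) (h1 : a ≤ r1)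
    (hw : hasRankWitness [r0, r1] W) : a + 1 ≤ W := by
  obtain ⟨big, X, v, hX1, hXW, hv, hR1l, hR1r, hR2l, hR2r, π, hπ, hinj⟩ := hw
  have hr : ∀ i ∈ big, a ≤ [r0, r1].get i := by
    intro i _; fin_cases i
    exacts [h0, h1]
  have hcard := big_card_bound (rs := [r0, r1]) ⟨v, hv⟩ hr hπ hinj
  exact rank_pair_core a W X big v (fun i => [r0, r1].get i)
    h0 h1 hX1 hXW hv hcard hR2l hR2r

lemma rank_five_lb (a r0 r1 r2 r3 r4 W : ℕ) (ha : 1 ≤ a) (h0 : a ≤ r0) (h1 : a ≤ r1)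
    (h2 : a + 1 ≤ r2) (h3 : a ≤ r3) (h4 : a ≤ r4)
    (hw : hasRankWitness [r0, r1, r2, r3, r4] W) : a + 2 ≤ W := by
  obtain ⟨big, X, v, hX1, hXW, hv, hR1l, hR1r, hR2l, hR2r, π, hπ, hinj⟩ := hw
  have hr : ∀ i ∈ big, a ≤ [r0, r1, r2, r3, r4].get i := by
    intro i _; fin_cases i
    exacts [h0, h1, le_trans (Nat.le_succ a) h2, h3, h4]
  have hcard := big_card_bound (rs := [r0, r1, r2, r3, r4]) ⟨v, hv⟩ hr hπ hinj
  exact rank_five_core a W X big v (fun i => [r0, r1, r2, r3, r4].get i)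
    h0 h1 h2 h3 h4 ha hX1 hXW hv hcard hR2l hR2r


/-- For every `i ≥ 1`: every node of `T_i` has at most 5 children,
`rpw (T_i) ≤ i`, and `R(T_i) ≥ 2·i - 1`. -/
theorem rpw_le_but_rank_large :
    ∀ i, 1 ≤ i →
      DegLE 5 (Tquint i) ∧ rpw (Tquint i) ≤ i ∧
        2 * i - 1 ≤ rank (Tquint i) := by

  have key : ∀ n : ℕ, DegLE 5 (Tquint (n+1)) ∧ rpw (Tquint (n+1)) ≤ n+1 ∧
      2 * (n+1) - 1 ≤ rank (Tquint (n+1)) := by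
    intro n
    induction n with
    | zero =>
      have h1 : Tquint 1 = node [] := rfl
      rw [h1]
      refine ⟨DegLE.mk [] (by simp) (by simp), ?_, ?_⟩
      · rw [rpw_node]; simp [rpwAux]
      · rw [rank_node]; simp [rankAux]
    | succ n ih =>
      obtain ⟨hdeg, hrpw, hrank⟩ := ih
      have hT2 : Tquint (n+1+1) = node [Tquint (n+1), Tquint (n+1),
          node [Tquint (n+1), Tquint (n+1)], Tquint (n+1), Tquint (n+1)] := rfl
      rw [hT2]
      set T := Tquint (n+1) with hT
      refine ⟨?_, ?_, ?_⟩
      · refine DegLE.mk _ (by simp) ?_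
        intro c hc
        simp only [List.mem_cons, List.not_mem_nil, or_false] at hc
        rcases hc with rfl | rfl | rfl | rfl | rfl
        · exact hdeg
        · exact hdeg
        · refine DegLE.mk _ (by simp) ?_
          intro c hc
          simp only [List.mem_cons, List.not_mem_nil, or_false] at hc
          rcases hc with rfl | rfl <;> exact hdeg
        · exact hdeg
        · exact hdeg
      · rw [rpw_node]
        simp only [List.map_cons, List.map_nil]
        have hq : rpw (node [T, T]) ≤ n + 2 := by
          rw [rpw_node]; simp only [List.map_cons, List.map_nil]
          refine rpwAux_le (j := 0) (by simp) ?_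
          intro i hi
          simp only [List.length_cons, List.length_nil] at hi
          interval_cases i <;> simp <;> omega
        refine rpwAux_le (j := 2) (by simp) ?_
        intro i hi
        simp only [List.length_cons, List.length_nil] at hi
        interval_cases i <;> simp <;> omega
      · rw [rank_node]
        simp only [List.map_cons, List.map_nil]
        have hmlb : 2*n+2 ≤ rank (node [T, T]) := by
          rw [rank_node]; simp only [List.map_cons, List.map_nil]
          refine rankAux_lb _ _ (by simp) (fun W hw => ?_)
          have := rank_pair_lb (2*n+1) (rank T) (rank T) W (by omega) (by omega) hw
          omega
        have h5 := rankAux_lb [rank T, rank T, rank (node [T, T]), rank T, rank T]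
          (2*n+3) (by simp) (fun W hw => by
            have := rank_five_lb (2*n+1) (rank T) (rank T) (rank (node [T, T]))
              (rank T) (rank T) W (by omega) (by omega) (by omega) (by omega)
              (by omega) (by omega) hw
            omega)
        omega
  intro i hi
  obtain ⟨n, rfl⟩ : ∃ n, i = n + 1 := ⟨i - 1, by omega⟩
  exact key n


end RTree
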